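/- If X ~ UNB(r,p) and Y ~ NB(r,p), then for every x >= 0 the cdf of X satisfies F_X(x) = F_Y(x) + (r+x)/(x+2) * C(r+x-1, x) * p^r q^{x+1} * 2F1(1, r+x+1; x+3; q). -/

import Mathlib

open scoped BigOperators

/-- Pochhammer (rising factorial) `(a)_n`. -/
noncomputable def poch (a : ℝ) (n : ℕ) : ℝ := ∏ i ∈ Finset.range n, (a + i)

/-- Gauss hypergeometric function `₂F₁(a,b;c;z)`. -/
noncomputable def F21 (a b c z : ℝ) : ℝ :=
  ∑' n : ℕ, poch a n * poch b n / poch c n * z ^ n / n.factorial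

/-- Pmf of the Uniform–Negative Binomial distribution `UNB(r,p)`. -/
noncomputable def unbPMF (r p : ℝ) (x : ℕ) : ℝ :=
  (1 - p) ^ x * p ^ r / (x + 1) *
    (Real.Gamma (r + x) / (Real.Gamma r * (x.factorial : ℝ))) *
    F21 1 (r + x) (2 + x) (1 - p)

/-- Pmf of the negative binomial distribution `NB(r,p)` (generalized binomial coefficient). -/
noncomputable def nbPMF (r p : ℝ) (n : ℕ) : ℝ :=
  Real.Gamma (r + n) / (Real.Gamma r * (n.factorial : ℝ)) * p ^ r * (1 - p) ^ n

lemma poch_zero (a : ℝ) : poch a 0 = 1 := by simp [poch]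

lemma poch_succ (a : ℝ) (n : ℕ) : poch a (n+1) = poch a n * (a + n) :=
  Finset.prod_range_succ _ _

lemma poch_one (n : ℕ) : poch 1 n = n.factorial := by
  induction n with
  | zero => simp [poch]
  | succ n ih => rw [poch_succ, ih]; push_cast [Nat.factorial_succ]; ring

lemma poch_pos {a : ℝ} (ha : 0 < a) (n : ℕ) : 0 < poch a n :=
  Finset.prod_pos (fun i _ => by positivity)

lemma poch_nat (m n : ℕ) : poch ((m+1 : ℕ) : ℝ) n * (m.factorial : ℝ) = ((m+n).factorial : ℝ) := by
  induction n with
  | zero => simp [poch]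
  | succ n ih =>
    rw [poch_succ]
    push_cast at ih ⊢
    rw [show m + (n+1) = (m+n)+1 from by ring, Nat.factorial_succ]
    push_cast
    nlinarith [ih]

lemma Gamma_add_poch {a : ℝ} (ha : 0 < a) (n : ℕ) :
    Real.Gamma (a + n) = Real.Gamma a * poch a n := by
  induction n with
  | zero => simp [poch]
  | succ n ih =>
    have h1 : a + ((n+1 : ℕ) : ℝ) = (a + n) + 1 := by push_cast; ring
    rw [h1, Real.Gamma_add_one (by positivity), ih, poch_succ]; ring

lemma lemA (r p : ℝ) (hr : 0 < r) (k : ℕ) :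
    unbPMF r p k = ∑' n : ℕ, nbPMF r p (k+n) / ((k+n : ℕ) + 1) := by
  rw [unbPMF, F21, ← tsum_mul_left]
  apply tsum_congr
  intro n
  rw [poch_one]
  have h2 : (2 + (k:ℝ)) = ((k+1+1 : ℕ) : ℝ) := by push_cast; ring
  have hG : Real.Gamma (r + ((k+n:ℕ):ℝ)) = Real.Gamma (r + k) * poch (r + k) n := by
    rw [show r + ((k+n:ℕ):ℝ) = (r + (k:ℝ)) + (n:ℕ) from by push_cast; ring]
    exact Gamma_add_poch (by positivity) n
  have hne : poch (((k+1+1:ℕ)):ℝ) n ≠ 0 := ne_of_gt (poch_pos (by positivity) n)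
  have hpoch : poch (((k+1+1:ℕ)):ℝ) n = ((k+1+n).factorial : ℝ) / ((k+1).factorial : ℝ) := by
    rw [eq_div_iff (by exact_mod_cast (k+1).factorial_ne_zero)]
    exact poch_nat (k+1) n
  have hf1 : ((k+1+n).factorial : ℝ) = ((k:ℝ)+(n:ℝ)+1) * ((k+n).factorial : ℝ) := by
    rw [show k+1+n = (k+n)+1 from by ring, Nat.factorial_succ]; push_cast; ring
  have hf2 : ((k+1).factorial : ℝ) = ((k:ℝ)+1) * (k.factorial : ℝ) := by
    rw [Nat.factorial_succ]; push_cast; ring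
  rw [nbPMF, hG, h2, hpoch, hf1, hf2, pow_add]
  have hΓ : Real.Gamma r ≠ 0 := ne_of_gt (Real.Gamma_pos_of_pos hr)
  have e1 : (k.factorial : ℝ) ≠ 0 := by exact_mod_cast k.factorial_ne_zero
  have e2 : (n.factorial : ℝ) ≠ 0 := by exact_mod_cast n.factorial_ne_zero
  have e3 : ((k+n).factorial : ℝ) ≠ 0 := by exact_mod_cast (k+n).factorial_ne_zero
  have e4 : (k:ℝ) + 1 ≠ 0 := by positivity
  have e5 : (k:ℝ) + (n:ℝ) + 1 ≠ 0 := by positivity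
  have e6 : ((k+n:ℕ):ℝ) + 1 = (k:ℝ) + (n:ℝ) + 1 := by push_cast; ring
  rw [e6]
  field_simp

lemma lemB (r p : ℝ) (hr : 0 < r) (x : ℕ) :
    (r + x) / (x + 2) * (Real.Gamma (r + x) / (Real.Gamma r * (x.factorial : ℝ))) *
      p ^ r * (1 - p) ^ (x + 1) * F21 1 (r + x + 1) (x + 3) (1 - p)
    = ((x:ℝ)+1) * ∑' n : ℕ, nbPMF r p (x+1+n) / ((x+1+n : ℕ) + 1) := by
  rw [F21, ← tsum_mul_left, ← tsum_mul_left]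
  apply tsum_congr
  intro n
  rw [poch_one]
  have h3 : ((x:ℝ) + 3) = ((x+2+1 : ℕ) : ℝ) := by push_cast; ring
  have hG : Real.Gamma (r + ((x+1+n:ℕ):ℝ)) = (r + x) * Real.Gamma (r + x) * poch (r + (x:ℝ) + 1) n := by
    rw [show r + ((x+1+n:ℕ):ℝ) = (r + (x:ℝ) + 1) + (n:ℕ) from by push_cast; ring,
      Gamma_add_poch (by positivity) n,
      show r + (x:ℝ) + 1 = (r + (x:ℝ)) + 1 from by ring,
      Real.Gamma_add_one (by positivity)]
  have hne : poch (((x+2+1:ℕ)):ℝ) n ≠ 0 := ne_of_gt (poch_pos (by positivity) n)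
  have hpoch : poch (((x+2+1:ℕ)):ℝ) n = ((x+2+n).factorial : ℝ) / ((x+2).factorial : ℝ) := by
    rw [eq_div_iff (by exact_mod_cast (x+2).factorial_ne_zero)]
    exact poch_nat (x+2) n
  have hf1 : ((x+2+n).factorial : ℝ) = ((x:ℝ)+(n:ℝ)+2) * ((x+1+n).factorial : ℝ) := by
    rw [show x+2+n = (x+1+n)+1 from by ring, Nat.factorial_succ]; push_cast; ring
  have hf2 : ((x+2).factorial : ℝ) = ((x:ℝ)+2) * ((x:ℝ)+1) * (x.factorial : ℝ) := by
    rw [Nat.factorial_succ, Nat.factorial_succ]; push_cast; ring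
  rw [nbPMF, hG, h3, hpoch, hf1, hf2, show x+1+n = x+(1+n) from by ring, pow_add (1-p) x (1+n),
    show x+(1+n) = x+1+n from by ring, pow_add (1-p) 1 n]
  have hΓ : Real.Gamma r ≠ 0 := ne_of_gt (Real.Gamma_pos_of_pos hr)
  have e1 : (x.factorial : ℝ) ≠ 0 := by exact_mod_cast x.factorial_ne_zero
  have e2 : (n.factorial : ℝ) ≠ 0 := by exact_mod_cast n.factorial_ne_zero
  have e3 : ((x+1+n).factorial : ℝ) ≠ 0 := by exact_mod_cast (x+1+n).factorial_ne_zero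
  have e4 : (x:ℝ) + 2 ≠ 0 := by positivity
  have e5 : (x:ℝ) + (n:ℝ) + 2 ≠ 0 := by positivity
  have e6 : ((x+1+n:ℕ):ℝ) + 1 = (x:ℝ) + (n:ℝ) + 2 := by push_cast; ring
  rw [e6]
  field_simp
  ring

lemma hpos (r p : ℝ) (hr : 0 < r) (hp0 : 0 < p) (hp1 : p < 1) (j : ℕ) :
    0 < nbPMF r p j / ((j:ℝ) + 1) := by
  have h1 := Real.Gamma_pos_of_pos (show (0:ℝ) < r + j by positivity)
  have h2 := Real.Gamma_pos_of_pos hr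
  have h3 : (0:ℝ) < 1 - p := by linarith
  have h4 : (0:ℝ) < (j.factorial : ℝ) := by exact_mod_cast j.factorial_pos
  rw [nbPMF]
  positivity

lemma hratio (r p : ℝ) (hr : 0 < r) (hp0 : 0 < p) (hp1 : p < 1) (j : ℕ) :
    (nbPMF r p (j+1) / (((j+1:ℕ):ℝ) + 1)) / (nbPMF r p j / ((j:ℝ)+1))
      = (r + j) * ((j:ℝ)+2)⁻¹ * (1-p) := by
  have hG : Real.Gamma (r + ((j+1:ℕ):ℝ)) = (r + j) * Real.Gamma (r + j) := by
    rw [show r + ((j+1:ℕ):ℝ) = (r + (j:ℝ)) + 1 from by push_cast; ring,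
      Real.Gamma_add_one (by positivity)]
  have hf : ((j+1).factorial : ℝ) = ((j:ℝ)+1) * (j.factorial : ℝ) := by
    rw [Nat.factorial_succ]; push_cast; ring
  rw [nbPMF, nbPMF, hG, hf, pow_succ]
  have hΓr : Real.Gamma (r + j) ≠ 0 := ne_of_gt (Real.Gamma_pos_of_pos (by positivity))
  have hΓ : Real.Gamma r ≠ 0 := ne_of_gt (Real.Gamma_pos_of_pos hr)
  have e1 : (j.factorial : ℝ) ≠ 0 := by exact_mod_cast j.factorial_ne_zero
  have e2 : (j:ℝ) + 1 ≠ 0 := by positivity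
  have e3 : (j:ℝ) + 2 ≠ 0 := by positivity
  have e4 : ((j+1:ℕ):ℝ) + 1 = (j:ℝ) + 2 := by push_cast; ring
  have e5 : p ^ r ≠ 0 := ne_of_gt (Real.rpow_pos_of_pos hp0 r)
  have e6 : (1-p) ^ j ≠ 0 := pow_ne_zero _ (by linarith)
  rw [e4]
  field_simp

lemma hsum (r p : ℝ) (hr : 0 < r) (hp0 : 0 < p) (hp1 : p < 1) :
    Summable (fun j : ℕ => nbPMF r p j / ((j:ℝ) + 1)) := by
  have hq1 : 1 - p < 1 := by linarith
  apply summable_of_ratio_test_tendsto_lt_one hq1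
  · exact Filter.Eventually.of_forall fun n => ne_of_gt (hpos r p hr hp0 hp1 n)
  · have key : ∀ n : ℕ, (r + n) * ((n:ℝ)+2)⁻¹ * (1-p)
        = ‖nbPMF r p (n+1) / (((n+1:ℕ):ℝ) + 1)‖ / ‖nbPMF r p n / ((n:ℝ)+1)‖ := by
      intro n
      rw [Real.norm_of_nonneg (le_of_lt (hpos r p hr hp0 hp1 (n+1))),
        Real.norm_of_nonneg (le_of_lt (hpos r p hr hp0 hp1 n))]
      exact (hratio r p hr hp0 hp1 n).symm
    have hA : Filter.Tendsto (fun n : ℕ => ((n:ℝ)+2)) Filter.atTop Filter.atTop :=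
      Filter.tendsto_atTop_add_const_right _ 2 tendsto_natCast_atTop_atTop
    have h0 : Filter.Tendsto (fun n : ℕ => ((n:ℝ)+2)⁻¹) Filter.atTop (nhds 0) :=
      hA.inv_tendsto_atTop
    have h1 : Filter.Tendsto (fun n : ℕ => (1 + (r-2)*((n:ℝ)+2)⁻¹) * (1-p)) Filter.atTop
        (nhds ((1 + (r-2)*0) * (1-p))) :=
      (tendsto_const_nhds.add (tendsto_const_nhds.mul h0)).mul_const _
    simp only [mul_zero, add_zero, one_mul] at h1
    refine (h1.congr fun n => ?_)
    rw [← key n]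
    have e3 : (n:ℝ) + 2 ≠ 0 := by positivity
    field_simp
    ring_nf

lemma hsum' (r p : ℝ) (hr : 0 < r) (hp0 : 0 < p) (hp1 : p < 1) (m : ℕ) :
    Summable (fun n : ℕ => nbPMF r p (m+n) / (((m+n:ℕ):ℝ) + 1)) := by
  have h := (summable_nat_add_iff m).mpr (hsum r p hr hp0 hp1)
  exact h.congr (fun n => by rw [Nat.add_comm n m])

lemma stepL (r p : ℝ) (hr : 0 < r) (hp0 : 0 < p) (hp1 : p < 1) (m : ℕ) :
    (∑' n : ℕ, nbPMF r p (m+n) / (((m+n:ℕ):ℝ)+1))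
      = nbPMF r p m / ((m:ℝ)+1) + ∑' n : ℕ, nbPMF r p (m+1+n) / (((m+1+n:ℕ):ℝ)+1) := by
  rw [Summable.tsum_eq_zero_add (hsum' r p hr hp0 hp1 m)]
  have h2 : (∑' (b : ℕ), nbPMF r p (m + (b + 1)) / (((m + (b + 1) : ℕ):ℝ) + 1))
      = ∑' n : ℕ, nbPMF r p (m+1+n) / (((m+1+n : ℕ):ℝ) + 1) := by
    apply tsum_congr
    intro n
    rw [show m+(n+1) = m+1+n from by ring]
  rw [h2]
  norm_num

theorem stmt7 (r p : ℝ) (hr : 0 < r) (hp0 : 0 < p) (hp1 : p < 1) (x : ℕ) :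
    (∑ k ∈ Finset.range (x + 1), unbPMF r p k) =
      (∑ k ∈ Finset.range (x + 1), nbPMF r p k) +
        (r + x) / (x + 2) * (Real.Gamma (r + x) / (Real.Gamma r * (x.factorial : ℝ))) *
          p ^ r * (1 - p) ^ (x + 1) * F21 1 (r + x + 1) (x + 3) (1 - p) := by
  have key : ∀ y : ℕ, (∑ k ∈ Finset.range (y + 1), unbPMF r p k) =
      (∑ k ∈ Finset.range (y + 1), nbPMF r p k)
        + ((y:ℝ)+1) * ∑' n : ℕ, nbPMF r p (y+1+n) / (((y+1+n:ℕ):ℝ) + 1) := by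
    intro y
    induction y with
    | zero =>
      simp only [Nat.zero_add, Finset.sum_range_one]
      rw [lemA r p hr 0, stepL r p hr hp0 hp1 0]
      norm_num
    | succ x ih =>
      rw [Finset.sum_range_succ, ih, lemA r p hr (x+1), Finset.sum_range_succ _ (x+1)]
      rw [stepL r p hr hp0 hp1 (x+1)]
      have hnb : nbPMF r p (x+1) / (((x+1:ℕ):ℝ)+1) * (((x:ℝ)+1)+1) = nbPMF r p (x+1) := by
        have : ((x+1:ℕ):ℝ)+1 ≠ 0 := by push_cast; positivity
        field_simp
        push_cast; ring
      push_cast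
      push_cast at hnb
      nlinarith [hnb]
  rw [key x, lemB r p hr x]
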